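/- Let h(x,y) = A x^{a₁} e^{b₁ x} y^{a₂} e^{b₂ y} on ℝ₊² with A > 0 and aᵢ² + bᵢ² ≠ 0 for i = 1,2. Then H = h_xx + h_yy is constant on ℝ₊² if and only if H ≡ 0 and a₁ = a₂ = 1, b₁ = b₂ = 0. -/

import Mathlib

open Set Real

/-- Isotropic mean curvature of the Monge surface z = h(x,y). -/
noncomputable def isoMean (h : ℝ → ℝ → ℝ) (x y : ℝ) : ℝ :=
  deriv (deriv (fun x' => h x' y)) x + deriv (deriv (fun y' => h x y')) y

noncomputable def Ufun (a b x : ℝ) : ℝ := x ^ a * Real.exp (b * x)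
noncomputable def Wfun (a b x : ℝ) : ℝ :=
  (a*(a-1)*x^(a-2) + 2*a*b*x^(a-1) + b^2*x^a) * Real.exp (b*x)

lemma Ufun_pos (a b : ℝ) {x : ℝ} (hx : 0 < x) : 0 < Ufun a b x :=
  mul_pos (Real.rpow_pos_of_pos hx a) (Real.exp_pos _)

lemma hasDerivAt_U (a b : ℝ) {x : ℝ} (hx : 0 < x) :
    HasDerivAt (fun t => t ^ a * Real.exp (b * t))
      ((a * x^(a-1) + b * x^a) * Real.exp (b*x)) x := by
  have h1 : HasDerivAt (fun t : ℝ => t ^ a) (a * x^(a-1)) x := by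
    simpa [mul_comm] using Real.hasDerivAt_rpow_const (Or.inl hx.ne')
  have h2 : HasDerivAt (fun t : ℝ => Real.exp (b*t)) (Real.exp (b*x) * b) x := by
    simpa using ((hasDerivAt_id x).const_mul b).exp
  refine (h1.mul h2).congr_deriv ?_
  ring

lemma hasDerivAt_W (a b : ℝ) {x : ℝ} (hx : 0 < x) :
    HasDerivAt (fun t => (a * t^(a-1) + b * t^a) * Real.exp (b*t)) (Wfun a b x) x := by
  have h1 : HasDerivAt (fun t : ℝ => a * t^(a-1) + b * t^a)
      (a * ((a-1) * x^(a-2)) + b * (a * x^(a-1))) x := by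
    have ha : HasDerivAt (fun t : ℝ => t^(a-1)) ((a-1) * x^(a-1-1)) x := by
      simpa [mul_comm] using Real.hasDerivAt_rpow_const (p := a-1) (Or.inl hx.ne')
    have hb : HasDerivAt (fun t : ℝ => t^a) (a * x^(a-1)) x := by
      simpa [mul_comm] using Real.hasDerivAt_rpow_const (p := a) (Or.inl hx.ne')
    have : (a - 1 - 1) = a - 2 := by ring
    rw [this] at ha
    exact (ha.const_mul a).add (hb.const_mul b)
  have h2 : HasDerivAt (fun t : ℝ => Real.exp (b*t)) (Real.exp (b*x) * b) x := by
    simpa using ((hasDerivAt_id x).const_mul b).exp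
  refine (h1.mul h2).congr_deriv ?_
  unfold Wfun
  ring

lemma deriv2 (C a b : ℝ) {x : ℝ} (hx : 0 < x) :
    deriv (deriv (fun t => t ^ a * Real.exp (b * t) * C)) x = Wfun a b x * C := by
  have hev : deriv (fun t => t ^ a * Real.exp (b*t) * C)
      =ᶠ[nhds x] (fun t => (a * t^(a-1) + b * t^a) * Real.exp (b*t) * C) := by
    filter_upwards [isOpen_Ioi.mem_nhds hx] with t ht
    exact ((hasDerivAt_U a b ht).mul_const C).deriv
  rw [hev.deriv_eq]
  exact ((hasDerivAt_W a b hx).mul_const C).deriv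

lemma W_eq (a b : ℝ) {x : ℝ} (hx : 0 < x) :
    Wfun a b x = Ufun a b x * (a*(a-1)/x^2 + 2*a*b/x + b^2) := by
  have e1 : x ^ (a-1) = x ^ a / x := by
    rw [Real.rpow_sub hx, Real.rpow_one]
  have e2 : x ^ (a-2) = x ^ a / x^2 := by
    rw [Real.rpow_sub hx, show (2:ℝ) = ((2:ℕ):ℝ) by norm_num, Real.rpow_natCast]
  unfold Wfun Ufun
  rw [e1, e2]
  field_simp

lemma polyzero {p q r : ℝ} (h : ∀ x : ℝ, 0 < x → p / x^2 + q / x + r = 0) :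
    p = 0 ∧ q = 0 ∧ r = 0 := by
  have h1 := h 1 one_pos
  have h2 := h 2 two_pos
  have h3 := h 3 (by norm_num)
  norm_num at h1 h2 h3
  refine ⟨by linarith, by linarith, by linarith⟩

lemma U_nonconst (a b : ℝ) (h : a^2 + b^2 ≠ 0) :
    ∃ s t : ℝ, 0 < s ∧ 0 < t ∧ Ufun a b s ≠ Ufun a b t := by
  by_contra hc
  push_neg at hc
  have hU : ∀ y : ℝ, 0 < y → Ufun a b y = Real.exp (Real.log y * a + b * y) := by
    intro y hy
    unfold Ufun
    rw [Real.rpow_def_of_pos hy, ← Real.exp_add]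
  have e1 := hc 1 (Real.exp 1) one_pos (Real.exp_pos 1)
  have e2 := hc 1 (Real.exp 2) one_pos (Real.exp_pos 2)
  rw [hU 1 one_pos, hU _ (Real.exp_pos 1)] at e1
  rw [hU 1 one_pos, hU _ (Real.exp_pos 2)] at e2
  have f1 : Real.log 1 * a + b * 1 = Real.log (Real.exp 1) * a + b * Real.exp 1 :=
    Real.exp_injective e1
  have f2 : Real.log 1 * a + b * 1 = Real.log (Real.exp 2) * a + b * Real.exp 2 :=
    Real.exp_injective e2
  simp [Real.log_exp] at f1 f2
  have hee : Real.exp 2 = Real.exp 1 * Real.exp 1 := by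
    rw [← Real.exp_add]; norm_num
  have he : (1:ℝ) < Real.exp 1 := by
    have := Real.exp_one_gt_d9; linarith
  have hb0 : b * (Real.exp 1 - 1)^2 = 0 := by
    rw [hee] at f2; nlinarith [f1, f2]
  have hb : b = 0 := by
    rcases mul_eq_zero.1 hb0 with h' | h'
    · exact h'
    · nlinarith
  have ha : a = 0 := by nlinarith [f1, hb]
  exact h (by rw [ha, hb]; ring)

lemma isoMean_eq (A a₁ a₂ b₁ b₂ : ℝ) {x y : ℝ} (hx : 0 < x) (hy : 0 < y) :
    isoMean (fun x y => A * x ^ a₁ * Real.exp (b₁ * x) * y ^ a₂ * Real.exp (b₂ * y)) x y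
      = Wfun a₁ b₁ x * (A * Ufun a₂ b₂ y) + Wfun a₂ b₂ y * (A * Ufun a₁ b₁ x) := by
  unfold isoMean
  have e1 : (fun x' => A * x' ^ a₁ * Real.exp (b₁ * x') * y ^ a₂ * Real.exp (b₂ * y))
      = fun t => t ^ a₁ * Real.exp (b₁ * t) * (A * (y ^ a₂ * Real.exp (b₂ * y))) := by
    funext t; ring
  have e2 : (fun y' => A * x ^ a₁ * Real.exp (b₁ * x) * y' ^ a₂ * Real.exp (b₂ * y'))
      = fun t => t ^ a₂ * Real.exp (b₂ * t) * (A * (x ^ a₁ * Real.exp (b₁ * x))) := by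
    funext t; ring
  rw [e1, e2, deriv2 _ a₁ b₁ hx, deriv2 _ a₂ b₂ hy]
  unfold Ufun
  ring

/-- Corollary 3.5(B): the transcendental production surface
z = A x^{a₁} e^{b₁x} y^{a₂} e^{b₂y} has constant isotropic mean curvature iff
H ≡ 0 and a₁ = a₂ = 1, b₁ = b₂ = 0. -/
theorem stmt19 (A a₁ a₂ b₁ b₂ : ℝ) (hA : 0 < A)
    (h1 : a₁ ^ 2 + b₁ ^ 2 ≠ 0) (h2 : a₂ ^ 2 + b₂ ^ 2 ≠ 0) :
    (∃ c : ℝ, ∀ x y : ℝ, 0 < x → 0 < y →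
        isoMean (fun x y =>
          A * x ^ a₁ * Real.exp (b₁ * x) * y ^ a₂ * Real.exp (b₂ * y)) x y = c)
    ↔ ((∀ x y : ℝ, 0 < x → 0 < y →
        isoMean (fun x y =>
          A * x ^ a₁ * Real.exp (b₁ * x) * y ^ a₂ * Real.exp (b₂ * y)) x y = 0) ∧
       a₁ = 1 ∧ a₂ = 1 ∧ b₁ = 0 ∧ b₂ = 0) := by
  constructor
  · rintro ⟨c, hc⟩
    -- the key constancy relation in terms of Ufun / Wfun
    have hK : ∀ x y : ℝ, 0 < x → 0 < y →
        Wfun a₁ b₁ x * Ufun a₂ b₂ y + Ufun a₁ b₁ x * Wfun a₂ b₂ y = c / A := by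
      intro x y hx hy
      have h' := hc x y hx hy
      rw [isoMean_eq A a₁ a₂ b₁ b₂ hx hy] at h'
      rw [eq_div_iff hA.ne']
      linarith [h']
    obtain ⟨s, t, hs, ht, hst⟩ := U_nonconst a₂ b₂ h2
    have hsub : ∀ x : ℝ, 0 < x →
        Wfun a₁ b₁ x * (Ufun a₂ b₂ s - Ufun a₂ b₂ t)
          + Ufun a₁ b₁ x * (Wfun a₂ b₂ s - Wfun a₂ b₂ t) = 0 := by
      intro x hx
      linear_combination (hK x s hx hs) - (hK x t hx ht)
    set μ : ℝ := -(Wfun a₂ b₂ s - Wfun a₂ b₂ t) / (Ufun a₂ b₂ s - Ufun a₂ b₂ t) with hμ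
    have hdne : Ufun a₂ b₂ s - Ufun a₂ b₂ t ≠ 0 := sub_ne_zero.mpr hst
    have hw : ∀ x : ℝ, 0 < x → Wfun a₁ b₁ x = Ufun a₁ b₁ x * μ := by
      intro x hx
      have h' := hsub x hx
      rw [hμ]
      field_simp
      linarith [h']
    have hpoly1 : ∀ x : ℝ, 0 < x →
        (a₁*(a₁-1)) / x^2 + (2*a₁*b₁) / x + (b₁^2 - μ) = 0 := by
      intro x hx
      have h' := hw x hx
      rw [W_eq a₁ b₁ hx] at h'
      have hu := (Ufun_pos a₁ b₁ hx).ne'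
      have h'' := mul_left_cancel₀ hu (by linarith [h'] :
        Ufun a₁ b₁ x * (a₁*(a₁-1)/x^2 + 2*a₁*b₁/x + b₁^2) = Ufun a₁ b₁ x * μ)
      linarith [h'']
    obtain ⟨hA1, hB1, hC1⟩ := polyzero hpoly1
    -- so μ = b₁^2 and Wfun a₁ b₁ x = Ufun a₁ b₁ x * b₁^2
    have hμval : μ = b₁^2 := by linarith
    obtain ⟨s', t', hs', ht', hst'⟩ := U_nonconst a₁ b₁ h1
    have hdne' : Ufun a₁ b₁ s' - Ufun a₁ b₁ t' ≠ 0 := sub_ne_zero.mpr hst'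
    have hq : ∀ y : ℝ, 0 < y → b₁^2 * Ufun a₂ b₂ y + Wfun a₂ b₂ y = 0 := by
      intro y hy
      have e1 := hK s' y hs' hy
      have e2 := hK t' y ht' hy
      rw [hw s' hs', hμval] at e1
      rw [hw t' ht', hμval] at e2
      have : (Ufun a₁ b₁ s' - Ufun a₁ b₁ t') * (b₁^2 * Ufun a₂ b₂ y + Wfun a₂ b₂ y) = 0 := by
        linear_combination e1 - e2
      exact (mul_eq_zero.1 this).resolve_left hdne'
    have hc0 : c / A = 0 := by
      have e1 := hK s' 1 hs' one_pos
      rw [hw s' hs', hμval] at e1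
      have hq1 := hq 1 one_pos
      linear_combination Ufun a₁ b₁ s' * hq1 - e1
    have hpoly2 : ∀ y : ℝ, 0 < y →
        (a₂*(a₂-1)) / y^2 + (2*a₂*b₂) / y + (b₂^2 + b₁^2) = 0 := by
      intro y hy
      have h' := hq y hy
      rw [W_eq a₂ b₂ hy] at h'
      have hu := (Ufun_pos a₂ b₂ hy).ne'
      have h'' : Ufun a₂ b₂ y * (a₂*(a₂-1)/y^2 + 2*a₂*b₂/y + (b₂^2 + b₁^2)) = 0 := by
        linarith [h']
      have := (mul_eq_zero.1 h'').resolve_left hu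
      linarith [this]
    obtain ⟨hA2, hB2, hC2⟩ := polyzero hpoly2
    have hb1 : b₁ = 0 := by nlinarith
    have hb2 : b₂ = 0 := by nlinarith
    have ha1 : a₁ = 1 := by
      have : a₁ ≠ 0 := fun h => h1 (by rw [h, hb1]; ring)
      have := mul_eq_zero.1 hA1
      rcases this with h' | h'
      · exact absurd h' this
      · linarith
    have ha2 : a₂ = 1 := by
      have : a₂ ≠ 0 := fun h => h2 (by rw [h, hb2]; ring)
      rcases mul_eq_zero.1 hA2 with h' | h'
      · exact absurd h' this
      · linarith
    have hcz : c = 0 := by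
      field_simp at hc0
      simpa using hc0
    refine ⟨?_, ha1, ha2, hb1, hb2⟩
    intro x y hx hy
    rw [← hcz]
    exact hc x y hx hy
  · rintro ⟨hz, _⟩
    exact ⟨0, hz⟩
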